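/- For Pareto distributions μᵢ = Par(αᵢ, cᵢ) with shapes αᵢ > 1 and means λᵢ = cᵢ/(1 − 1/αᵢ) (i = 1,2): μ₁ ≤_icx μ₂ if and only if λ₁ ≤ λ₂ and α₁ ≥ α₂; and μ₁ ≤_icv μ₂ if and only if λ₁ ≤ λ₂ and c₁ ≤ c₂. -/

import Mathlib

open MeasureTheory

/-- The Pareto distribution `Par(α,c)`: density `α c^α t^{-α-1}` on `(c,∞)`. -/
noncomputable def paretoMeasure (α c : ℝ) : Measure ℝ :=
  volume.withDensity (fun t => ENNReal.ofReal (if c < t then α * c ^ α * t ^ (-(α + 1)) else 0))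

/-- The increasing convex order: integrals of increasing convex functions
(for which the integrals exist) are ordered. -/
def icxLEmeas (μ ν : Measure ℝ) : Prop :=
  ∀ φ : ℝ → ℝ, Monotone φ → ConvexOn ℝ Set.univ φ →
    Integrable φ μ → Integrable φ ν → ∫ x, φ x ∂μ ≤ ∫ x, φ x ∂ν

/-- The increasing concave order: integrals of increasing concave functions
(for which the integrals exist) are ordered. -/
def icvLEmeas (μ ν : Measure ℝ) : Prop :=
  ∀ φ : ℝ → ℝ, Monotone φ → ConcaveOn ℝ Set.univ φ →
    Integrable φ μ → Integrable φ ν → ∫ x, φ x ∂μ ≤ ∫ x, φ x ∂ν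

open Set

section Aux

/-! ### Separation (subgradient) lemmas for convex/concave monotone functions -/

private lemma concave_secant_anti {φ : ℝ → ℝ} (hc : ConcaveOn ℝ Set.univ φ) {a x y : ℝ}
    (hxa : x ≠ a) (hya : y ≠ a) (hxy : x ≤ y) :
    (φ y - φ a) / (y - a) ≤ (φ x - φ a) / (x - a) := by
  have h := hc.neg.secant_mono (Set.mem_univ a) (Set.mem_univ x) (Set.mem_univ y) hxa hya hxy
  simp only [Pi.neg_apply] at h
  have h1 : (-φ x - -φ a) / (x - a) = -((φ x - φ a) / (x - a)) := by ring
  have h2 : (-φ y - -φ a) / (y - a) = -((φ y - φ a) / (y - a)) := by ring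
  rw [h1, h2] at h
  linarith

private lemma convex_sep {φ : ℝ → ℝ} (hm : Monotone φ) (hc : ConvexOn ℝ Set.univ φ) (x₀ : ℝ) :
    ∃ k : ℝ, 0 ≤ k ∧ (∀ a b, a ≤ b → b ≤ x₀ → φ b - φ a ≤ k * (b - a)) ∧
      (∀ a b, x₀ ≤ a → a ≤ b → k * (b - a) ≤ φ b - φ a) := by
  set S : Set ℝ := (fun y => (φ x₀ - φ y) / (x₀ - y)) '' Set.Iio x₀ with hS
  have hne : S.Nonempty := ⟨_, ⟨x₀ - 1, by simp, rfl⟩⟩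
  have hub : ∀ z ∈ S, z ≤ φ (x₀ + 1) - φ x₀ := by
    rintro _ ⟨y, hy, rfl⟩
    have hy' : y < x₀ := hy
    have h1 := hc.secant_mono (Set.mem_univ y) (Set.mem_univ x₀) (Set.mem_univ (x₀ + 1))
      (by linarith) (by intro h; linarith) (by linarith)
    have h2 := hc.secant_mono (Set.mem_univ (x₀ + 1)) (Set.mem_univ y) (Set.mem_univ x₀)
      (by intro h; linarith) (by intro h; linarith) hy'.le
    have e1 : (φ y - φ (x₀ + 1)) / (y - (x₀ + 1)) = (φ (x₀ + 1) - φ y) / (x₀ + 1 - y) := by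
      rw [← neg_div_neg_eq]; ring_nf
    have e2 : (φ x₀ - φ (x₀ + 1)) / (x₀ - (x₀ + 1)) = φ (x₀ + 1) - φ x₀ := by
      simp [div_eq_iff]
    rw [e1, e2] at h2
    calc (φ x₀ - φ y) / (x₀ - y) ≤ (φ (x₀ + 1) - φ y) / (x₀ + 1 - y) := h1
      _ ≤ φ (x₀ + 1) - φ x₀ := h2
  have hbdd : BddAbove S := ⟨_, hub⟩
  refine ⟨sSup S, ?_, ?_, ?_⟩
  · have hmem : (φ x₀ - φ (x₀ - 1)) / (x₀ - (x₀ - 1)) ∈ S := ⟨x₀ - 1, by simp, rfl⟩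
    have h0 : 0 ≤ (φ x₀ - φ (x₀ - 1)) / (x₀ - (x₀ - 1)) := by
      apply div_nonneg
      · have := hm (show x₀ - 1 ≤ x₀ by linarith); linarith
      · linarith
    exact h0.trans (le_csSup hbdd hmem)
  · intro a b hab hbx
    rcases eq_or_lt_of_le hab with rfl | hab'
    · simp
    have hax : a < x₀ := lt_of_lt_of_le hab' hbx
    have h1 := hc.secant_mono (Set.mem_univ a) (Set.mem_univ b) (Set.mem_univ x₀)
      (by intro h; exact absurd h (ne_of_gt hab')) (ne_of_gt hax) hbx
    have h2 : (φ x₀ - φ a) / (x₀ - a) ≤ sSup S := le_csSup hbdd ⟨a, hax, rfl⟩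
    have h3 : (φ b - φ a) / (b - a) ≤ sSup S := le_trans h1 h2
    rw [div_le_iff₀ (by linarith)] at h3
    linarith [h3]
  · intro a b hxa hab
    rcases eq_or_lt_of_le hab with rfl | hab'
    · simp
    have hk : sSup S ≤ (φ b - φ a) / (b - a) := by
      apply csSup_le hne
      rintro _ ⟨y, hy, rfl⟩
      have hy' : y < x₀ := hy
      have hyb : y < b := lt_of_lt_of_le hy' (le_trans hxa hab)
      have h1 := hc.secant_mono (Set.mem_univ y) (Set.mem_univ x₀) (Set.mem_univ b)
        (ne_of_gt hy') (ne_of_gt hyb) (le_trans hxa hab)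
      have h2 := hc.secant_mono (Set.mem_univ b) (Set.mem_univ y) (Set.mem_univ a)
        (ne_of_lt hyb) (by intro h; exact absurd h (ne_of_lt hab')) (le_trans hy'.le hxa)
      have e1 : (φ y - φ b) / (y - b) = (φ b - φ y) / (b - y) := by rw [← neg_div_neg_eq]; ring_nf
      have e2 : (φ a - φ b) / (a - b) = (φ b - φ a) / (b - a) := by rw [← neg_div_neg_eq]; ring_nf
      rw [e1, e2] at h2
      exact le_trans h1 h2
    rw [le_div_iff₀ (by linarith)] at hk
    linarith [hk]

private lemma concave_sep {φ : ℝ → ℝ} (hm : Monotone φ) (hc : ConcaveOn ℝ Set.univ φ) (x₀ : ℝ) :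
    ∃ k : ℝ, 0 ≤ k ∧ (∀ a b, a ≤ b → b ≤ x₀ → k * (b - a) ≤ φ b - φ a) ∧
      (∀ a b, x₀ ≤ a → a ≤ b → φ b - φ a ≤ k * (b - a)) := by
  set S : Set ℝ := (fun y => (φ y - φ x₀) / (y - x₀)) '' Set.Ioi x₀ with hS
  have hne : S.Nonempty := ⟨_, ⟨x₀ + 1, by simp, rfl⟩⟩
  have hub : ∀ z ∈ S, z ≤ φ x₀ - φ (x₀ - 1) := by
    rintro _ ⟨y, hy, rfl⟩
    have hy' : x₀ < y := hy
    have h1 := concave_secant_anti hc (a := x₀) (x := x₀ - 1) (y := y)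
      (by intro h; linarith) (ne_of_gt hy') (by linarith)
    have e2 : (φ (x₀ - 1) - φ x₀) / (x₀ - 1 - x₀) = φ x₀ - φ (x₀ - 1) := by
      simp [div_eq_iff]
    rw [e2] at h1
    exact h1
  have hbdd : BddAbove S := ⟨_, hub⟩
  refine ⟨sSup S, ?_, ?_, ?_⟩
  · have hmem : (φ (x₀ + 1) - φ x₀) / (x₀ + 1 - x₀) ∈ S := ⟨x₀ + 1, by simp, rfl⟩
    have h0 : 0 ≤ (φ (x₀ + 1) - φ x₀) / (x₀ + 1 - x₀) := by
      apply div_nonneg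
      · have := hm (show x₀ ≤ x₀ + 1 by linarith); linarith
      · linarith
    exact h0.trans (le_csSup hbdd hmem)
  · intro a b hab hbx
    rcases eq_or_lt_of_le hab with rfl | hab'
    · simp
    have hk : sSup S ≤ (φ b - φ a) / (b - a) := by
      apply csSup_le hne
      rintro _ ⟨y, hy, rfl⟩
      have hy' : x₀ < y := hy
      have hby : b < y := lt_of_le_of_lt hbx hy'
      have hay : a < y := lt_trans hab' hby
      have h1 := concave_secant_anti hc (a := y) (x := b) (y := x₀)
        (ne_of_lt hby) (ne_of_lt hy') hbx
      have h2 := concave_secant_anti hc (a := b) (x := a) (y := y)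
        (ne_of_lt hab') (ne_of_gt hby) hay.le
      have e1 : (φ x₀ - φ y) / (x₀ - y) = (φ y - φ x₀) / (y - x₀) := by
        rw [← neg_div_neg_eq]; ring_nf
      have e2 : (φ b - φ y) / (b - y) = (φ y - φ b) / (y - b) := by
        rw [← neg_div_neg_eq]; ring_nf
      have e3 : (φ a - φ b) / (a - b) = (φ b - φ a) / (b - a) := by
        rw [← neg_div_neg_eq]; ring_nf
      rw [e1, e2] at h1
      rw [e3] at h2
      exact le_trans h1 h2
    rw [le_div_iff₀ (by linarith)] at hk
    linarith [hk]
  · intro a b hxa hab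
    rcases eq_or_lt_of_le hab with rfl | hab'
    · simp
    have hxb : x₀ < b := lt_of_le_of_lt hxa hab'
    have h1 := concave_secant_anti hc (a := b) (x := x₀) (y := a)
      (ne_of_lt hxb) (by intro h; exact absurd h (ne_of_lt hab')) hxa
    have e1 : (φ a - φ b) / (a - b) = (φ b - φ a) / (b - a) := by rw [← neg_div_neg_eq]; ring_nf
    have e2 : (φ x₀ - φ b) / (x₀ - b) = (φ b - φ x₀) / (b - x₀) := by
      rw [← neg_div_neg_eq]; ring_nf
    rw [e1, e2] at h1
    have h2 : (φ b - φ x₀) / (b - x₀) ≤ sSup S := le_csSup hbdd ⟨b, hxb, rfl⟩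
    have h3 : (φ b - φ a) / (b - a) ≤ sSup S := le_trans h1 h2
    rw [div_le_iff₀ (by linarith)] at h3
    linarith [h3]

/-! ### The Pareto quantile function -/

/-- quantile function of the Pareto distribution -/
noncomputable def pq (α c : ℝ) (s : ℝ) : ℝ := c * (1 - s) ^ (-α⁻¹)

variable {α c α₁ α₂ c₁ c₂ : ℝ}

lemma measurable_pq : Measurable (pq α c) :=
  measurable_const.mul ((measurable_const.sub measurable_id).pow_const _)

lemma pq_pos (hc : 0 < c) {s : ℝ} (hs : s < 1) : 0 < pq α c s :=
  mul_pos hc (Real.rpow_pos_of_pos (by linarith) _)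

lemma pq_gt (hα : 1 < α) (hc : 0 < c) {s : ℝ} (h0 : 0 < s) (h1 : s < 1) : c < pq α c s := by
  have hb : (0:ℝ) < 1 - s := by linarith
  have hb1 : 1 - s < 1 := by linarith
  have : 1 < (1 - s) ^ (-α⁻¹) := by
    rw [Real.one_lt_rpow_iff_of_pos hb]
    exact Or.inr ⟨hb1, by simp [inv_pos]; positivity⟩
  calc c = c * 1 := (mul_one c).symm
    _ < pq α c s := by unfold pq; exact (mul_lt_mul_iff_right₀ hc).2 this

lemma pq_mono (hα : 1 < α) (hc : 0 < c) {s s' : ℝ} (hss : s ≤ s') (h1 : s' < 1) :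
    pq α c s ≤ pq α c s' := by
  unfold pq
  have h := Real.rpow_le_rpow_of_nonpos (x := 1 - s') (y := 1 - s) (z := -α⁻¹)
    (by linarith) (by linarith) (by simp; positivity)
  exact mul_le_mul_of_nonneg_left h hc.le

/-! ### Identification of the Pareto measure as the image of Lebesgue measure on `(0,1)` -/

lemma pareto_Iic (hα : 1 < α) (hc : 0 < c) (x : ℝ) :
    paretoMeasure α c (Iic x) =
      if c < x then ENNReal.ofReal (1 - c ^ α * x ^ (-α)) else 0 := by
  have hd : (fun t : ℝ => ENNReal.ofReal (if c < t then α * c ^ α * t ^ (-(α + 1)) else 0)) =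
      (Ioi c).indicator (fun t => ENNReal.ofReal (α * c ^ α * t ^ (-(α + 1)))) := by
    funext t
    by_cases h : c < t <;> simp [h, Set.indicator, mem_Ioi]
  rw [paretoMeasure, withDensity_apply _ measurableSet_Iic, hd,
    lintegral_indicator measurableSet_Ioi, Measure.restrict_restrict measurableSet_Ioi,
    Ioi_inter_Iic]
  by_cases hcx : c < x
  · rw [if_pos hcx]
    have hx0 : (0:ℝ) < x := hc.trans hcx
    have hInt : IntegrableOn (fun t : ℝ => α * c ^ α * t ^ (-(α + 1))) (Ioc c x) volume := by
      have h0 : (0:ℝ) ∉ Set.uIcc c x := by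
        rw [Set.mem_uIcc]; push_neg; constructor <;> intro h <;> linarith
      exact ((intervalIntegral.intervalIntegrable_rpow (Or.inr h0)).const_mul (α * c ^ α)).1
    have hnn : 0 ≤ᵐ[volume.restrict (Ioc c x)] fun t : ℝ => α * c ^ α * t ^ (-(α + 1)) := by
      filter_upwards [ae_restrict_mem measurableSet_Ioc] with t ht
      have : (0:ℝ) < t := hc.trans ht.1
      positivity
    rw [← ofReal_integral_eq_lintegral_ofReal hInt hnn]
    congr 1
    have h0 : (0:ℝ) ∉ Set.uIcc c x := by
      rw [Set.mem_uIcc]; push_neg; constructor <;> intro h <;> linarith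
    have hne : -(α + 1) ≠ -1 := by intro h; rw [neg_eq_iff_eq_neg] at h; norm_num at h; linarith
    have key : ∫ t in Ioc c x, α * c ^ α * t ^ (-(α + 1)) =
        α * c ^ α * ((x ^ (-(α+1)+1) - c ^ (-(α+1)+1)) / (-(α+1)+1)) := by
      rw [← intervalIntegral.integral_of_le hcx.le, intervalIntegral.integral_const_mul,
        integral_rpow (Or.inr ⟨hne, h0⟩)]
    rw [key]
    have hsimp : -(α+1)+1 = -α := by ring
    rw [hsimp]
    have hcα : (0:ℝ) < c ^ α := Real.rpow_pos_of_pos hc _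
    have hcneg : c ^ (-α) = (c ^ α)⁻¹ := Real.rpow_neg hc.le α
    rw [hcneg]
    field_simp
    ring
  · rw [if_neg hcx]
    rw [Set.Ioc_eq_empty (by exact fun h => hcx h), Measure.restrict_empty, lintegral_zero_measure]

lemma map_pq_Iic (hα : 1 < α) (hc : 0 < c) (x : ℝ) :
    ((volume.restrict (Ioo (0:ℝ) 1)).map (pq α c)) (Iic x) =
      if c < x then ENNReal.ofReal (1 - c ^ α * x ^ (-α)) else 0 := by
  rw [Measure.map_apply measurable_pq measurableSet_Iic,
    Measure.restrict_apply (measurable_pq measurableSet_Iic)]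
  by_cases hcx : c < x
  · rw [if_pos hcx]
    have hx0 : (0:ℝ) < x := hc.trans hcx
    have hxc1 : 1 < x / c := (one_lt_div hc).2 hcx
    have hrpos : (0:ℝ) < (x / c) ^ (-α) := Real.rpow_pos_of_pos (by positivity) _
    have hrlt1 : (x / c) ^ (-α) < 1 :=
      Real.rpow_lt_one_of_one_lt_of_neg hxc1 (by linarith)
    have hb0 : 0 < 1 - (x / c) ^ (-α) := by linarith
    have hb1 : 1 - (x / c) ^ (-α) < 1 := by linarith
    have hset : pq α c ⁻¹' Iic x ∩ Ioo 0 1 = Ioc 0 (1 - (x / c) ^ (-α)) := by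
      ext s
      simp only [mem_inter_iff, mem_preimage, mem_Iic, mem_Ioo, mem_Ioc]
      constructor
      · rintro ⟨hqx, hs0, hs1⟩
        refine ⟨hs0, ?_⟩
        have hu : (0:ℝ) < 1 - s := by linarith
        have h1 : (1 - s) ^ (-α⁻¹) ≤ x / c := by
          rw [le_div_iff₀ hc, mul_comm]; exact hqx
        rw [show -α⁻¹ = (-α)⁻¹ by rw [inv_neg]] at h1
        rw [Real.rpow_inv_le_iff_of_neg hu (by positivity) (by linarith)] at h1
        linarith
      · rintro ⟨hs0, hsb⟩
        have hs1 : s < 1 := lt_of_le_of_lt hsb hb1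
        have hu : (0:ℝ) < 1 - s := by linarith
        refine ⟨?_, hs0, hs1⟩
        have h1 : (x / c) ^ (-α) ≤ 1 - s := by linarith
        rw [← Real.rpow_inv_le_iff_of_neg hu (by positivity) (by linarith)] at h1
        rw [show ((-α)⁻¹ : ℝ) = -α⁻¹ by rw [inv_neg]] at h1
        calc pq α c s = c * (1 - s) ^ (-α⁻¹) := rfl
          _ ≤ c * (x / c) := by exact mul_le_mul_of_nonneg_left h1 hc.le
          _ = x := by field_simp
    rw [hset, Real.volume_Ioc]
    congr 1
    have hxc : (x / c) ^ (-α) = c ^ α * x ^ (-α) := by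
      rw [Real.rpow_neg (by positivity), Real.div_rpow hx0.le hc.le,
        Real.rpow_neg hx0.le]
      have hxα : (0:ℝ) < x ^ α := Real.rpow_pos_of_pos hx0 _
      have hcα : (0:ℝ) < c ^ α := Real.rpow_pos_of_pos hc _
      field_simp
    rw [hxc]
    ring_nf
  · rw [if_neg hcx]
    push_neg at hcx
    have : pq α c ⁻¹' Iic x ∩ Ioo 0 1 = ∅ := by
      rw [Set.eq_empty_iff_forall_notMem]
      rintro s ⟨hqx, hs0, hs1⟩
      exact absurd (mem_Iic.1 hqx) (not_le.2 (lt_of_le_of_lt hcx (pq_gt hα hc hs0 hs1)))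
    rw [this]; simp

lemma pareto_eq_map (hα : 1 < α) (hc : 0 < c) :
    paretoMeasure α c = (volume.restrict (Ioo (0:ℝ) 1)).map (pq α c) := by
  haveI : IsFiniteMeasure (volume.restrict (Ioo (0:ℝ) 1)) :=
    ⟨by rw [Measure.restrict_apply_univ]; simp [Real.volume_Ioo]⟩
  haveI : IsFiniteMeasure ((volume.restrict (Ioo (0:ℝ) 1)).map (pq α c)) :=
    Measure.isFiniteMeasure_map _ _
  exact (Measure.ext_of_Iic _ _ (fun a => by
    rw [map_pq_Iic hα hc, pareto_Iic hα hc])).symm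

/-! ### Integrals of the quantile function -/

lemma intervalIntegrable_pq (hα : 1 < α) (a b : ℝ) :
    IntervalIntegrable (pq α c) volume a b := by
  have h : -1 < -α⁻¹ := by
    have : α⁻¹ < 1 := by rw [inv_lt_one_iff₀]; right; exact hα
    linarith
  have h1 : IntervalIntegrable (fun u : ℝ => u ^ (-α⁻¹)) volume (1 - b) (1 - a) :=
    intervalIntegral.intervalIntegrable_rpow' h
  have h2 := (h1.comp_sub_left 1).const_mul c
  exact (by simpa using h2.symm : IntervalIntegrable (fun x => c * (1 - x) ^ (-α⁻¹)) volume a b)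

lemma integrableOn_pq (hα : 1 < α) {a b : ℝ} :
    IntegrableOn (pq α c) (Ioo a b) volume :=
  ((intervalIntegrable_pq hα a b).1).mono_set Ioo_subset_Ioc_self

lemma integral_pq_tail (hα : 1 < α) {r : ℝ} (hr0 : 0 < r) :
    ∫ s in Ioo (1 - r) 1, pq α c s = (c * α / (α - 1)) * r ^ (1 - α⁻¹) := by
  have hle : 1 - r ≤ 1 := by linarith
  have hexp : -1 < -α⁻¹ := by
    have : α⁻¹ < 1 := by rw [inv_lt_one_iff₀]; right; exact hα
    linarith
  rw [← integral_Ioc_eq_integral_Ioo, ← intervalIntegral.integral_of_le hle]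
  have hcomp : (∫ s in (1 - r)..1, pq α c s) =
      ∫ u in (1 - 1 : ℝ)..(1 - (1 - r)), c * u ^ (-α⁻¹) := by
    rw [← intervalIntegral.integral_comp_sub_left (fun u => c * u ^ (-α⁻¹)) 1]
    rfl
  rw [hcomp]
  have e1 : (1 - 1 : ℝ) = 0 := by ring
  have e2 : (1 - (1 - r) : ℝ) = r := by ring
  rw [e1, e2, intervalIntegral.integral_const_mul, integral_rpow (Or.inl hexp)]
  have hz : (0:ℝ) ^ (-α⁻¹ + 1) = 0 := by
    apply Real.zero_rpow; intro h
    have hai : α⁻¹ < 1 := by rw [inv_lt_one_iff₀]; right; exact hα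
    linarith
  rw [hz]
  rw [show -α⁻¹ + 1 = 1 - α⁻¹ by ring]
  have hα0 : α ≠ 0 := by linarith
  have hα1 : α - 1 ≠ 0 := by intro h; apply hα.ne'; linarith
  have h1a : 1 - α⁻¹ ≠ 0 := by
    intro h
    have hai : α⁻¹ < 1 := by rw [inv_lt_one_iff₀]; right; exact hα
    linarith
  field_simp
  ring

lemma integral_pq (hα : 1 < α) :
    ∫ s in Ioo (0:ℝ) 1, pq α c s = c * α / (α - 1) := by
  have h := integral_pq_tail (c := c) hα (r := 1) one_pos
  simpa using h

lemma integ_step {ν : Measure ℝ} {f₁ f₂ g₁ g₂ : ℝ → ℝ} (hf₁ : Integrable f₁ ν)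
    (hf₂ : Integrable f₂ ν) (hg₁ : Integrable g₁ ν) (hg₂ : Integrable g₂ ν) {k : ℝ}
    (hk : 0 ≤ k) (hpt : ∀ᵐ s ∂ν, f₁ s - f₂ s ≤ k * (g₁ s - g₂ s))
    (hg : ∫ s, g₁ s ∂ν ≤ ∫ s, g₂ s ∂ν) : ∫ s, f₁ s ∂ν ≤ ∫ s, f₂ s ∂ν := by
  have h1 : ∫ s, (f₁ s - f₂ s) ∂ν ≤ ∫ s, k * (g₁ s - g₂ s) ∂ν :=
    integral_mono_ae (hf₁.sub hf₂) ((hg₁.sub hg₂).const_mul k) hpt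
  rw [integral_sub hf₁ hf₂, integral_const_mul, integral_sub hg₁ hg₂] at h1
  have h2 : k * (∫ s, g₁ s ∂ν - ∫ s, g₂ s ∂ν) ≤ 0 :=
    mul_nonpos_of_nonneg_of_nonpos hk (by linarith)
  linarith

/-! ### Transfer lemmas -/

lemma pareto_integral (hα : 1 < α) (hc : 0 < c) {φ : ℝ → ℝ} (hφ : Measurable φ) :
    ∫ x, φ x ∂(paretoMeasure α c) = ∫ s in Ioo (0:ℝ) 1, φ (pq α c s) := by
  rw [pareto_eq_map hα hc, integral_map measurable_pq.aemeasurable hφ.aestronglyMeasurable]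

lemma pareto_integrable (hα : 1 < α) (hc : 0 < c) {φ : ℝ → ℝ} (hφ : Measurable φ) :
    Integrable φ (paretoMeasure α c) ↔
      IntegrableOn (fun s => φ (pq α c s)) (Ioo (0:ℝ) 1) volume := by
  rw [pareto_eq_map hα hc,
    integrable_map_measure hφ.aestronglyMeasurable measurable_pq.aemeasurable]
  rfl

lemma rpow_collapse {x a : ℝ} (hx : 0 < x) (ha : a ≠ 0) : (x ^ a) ^ (-a⁻¹) = x⁻¹ := by
  rw [← Real.rpow_mul hx.le, mul_neg, mul_inv_cancel₀ ha, Real.rpow_neg_one]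

lemma pq_thresh {u : ℝ} (hc : 0 < c) (hu : 0 < u) (hα0 : α ≠ 0) :
    c * ((c / u) ^ α) ^ (-α⁻¹) = u := by
  rw [rpow_collapse (by positivity) hα0, inv_div]
  field_simp

lemma pq_le_iff (hc₂ : 0 < c₂) {s : ℝ} (h1 : s < 1) :
    pq α₁ c₁ s ≤ pq α₂ c₂ s ↔ c₁ ≤ c₂ * (1 - s) ^ (α₁⁻¹ - α₂⁻¹) := by
  have hr : (0:ℝ) < 1 - s := by linarith
  have hB : (0:ℝ) < (1 - s) ^ (-α₁⁻¹) := Real.rpow_pos_of_pos hr _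
  unfold pq
  rw [show (α₁⁻¹ - α₂⁻¹ : ℝ) = -α₂⁻¹ - -α₁⁻¹ by ring, Real.rpow_sub hr, ← mul_div_assoc,
    le_div_iff₀ hB]

lemma pq_le_pq (hα₂ : 1 < α₂) (hα : α₂ ≤ α₁) (hc₂ : 0 < c₂) (hc : c₁ ≤ c₂) {s : ℝ}
    (h0 : 0 ≤ s) (h1 : s < 1) : pq α₁ c₁ s ≤ pq α₂ c₂ s := by
  rw [pq_le_iff hc₂ h1]
  have hα₂0 : (0:ℝ) < α₂ := by linarith
  have hinv : α₁⁻¹ ≤ α₂⁻¹ := inv_anti₀ hα₂0 hα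
  have hε : α₁⁻¹ - α₂⁻¹ ≤ 0 := by linarith
  have hrle1 : 1 ≤ (1 - s) ^ (α₁⁻¹ - α₂⁻¹) :=
    Real.one_le_rpow_of_pos_of_le_one_of_nonpos (by linarith) (by linarith) hε
  calc c₁ ≤ c₂ := hc
    _ = c₂ * 1 := (mul_one _).symm
    _ ≤ c₂ * (1 - s) ^ (α₁⁻¹ - α₂⁻¹) := mul_le_mul_of_nonneg_left hrle1 hc₂.le

/-! ### Test functions -/

lemma phi_max_mono (t : ℝ) : Monotone (fun x : ℝ => max (x - t) 0) :=
  fun _ _ h => max_le_max (by linarith) le_rfl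

lemma phi_max_convex (t : ℝ) : ConvexOn ℝ Set.univ (fun x : ℝ => max (x - t) 0) := by
  refine ⟨convex_univ, fun x _ y _ a b ha hb hab => ?_⟩
  simp only [smul_eq_mul]
  have ht' : a * t + b * t = t := by
    calc a * t + b * t = (a + b) * t := by ring
      _ = t := by rw [hab, one_mul]
  apply max_le
  · have h1 := mul_le_mul_of_nonneg_left (le_max_left (x - t) (0:ℝ)) ha
    have h2 := mul_le_mul_of_nonneg_left (le_max_left (y - t) (0:ℝ)) hb
    nlinarith
  · have h1 := mul_le_mul_of_nonneg_left (le_max_right (x - t) (0:ℝ)) ha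
    have h2 := mul_le_mul_of_nonneg_left (le_max_right (y - t) (0:ℝ)) hb
    nlinarith

lemma phi_min_mono (t : ℝ) : Monotone (fun x : ℝ => min x t) :=
  fun _ _ h => min_le_min h le_rfl

lemma phi_min_concave (t : ℝ) : ConcaveOn ℝ Set.univ (fun x : ℝ => min x t) := by
  refine ⟨convex_univ, fun x _ y _ a b ha hb hab => ?_⟩
  simp only [smul_eq_mul]
  have ht' : a * t + b * t = t := by
    calc a * t + b * t = (a + b) * t := by ring
      _ = t := by rw [hab, one_mul]
  apply le_min
  · have h1 := mul_le_mul_of_nonneg_left (min_le_left x t) ha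
    have h2 := mul_le_mul_of_nonneg_left (min_le_left y t) hb
    nlinarith
  · have h1 := mul_le_mul_of_nonneg_left (min_le_right x t) ha
    have h2 := mul_le_mul_of_nonneg_left (min_le_right y t) hb
    nlinarith

end Aux

/-- For Pareto distributions `μᵢ = Par(αᵢ,cᵢ)` with shapes `αᵢ > 1` and means
`λᵢ = cᵢ/(1-1/αᵢ)`: `μ₁ ≤_icx μ₂` iff `λ₁ ≤ λ₂` and `α₁ ≥ α₂`; and
`μ₁ ≤_icv μ₂` iff `λ₁ ≤ λ₂` and `c₁ ≤ c₂`. -/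
theorem pareto_icx_icv_iff (α₁ α₂ c₁ c₂ : ℝ) (hα₁ : 1 < α₁) (hα₂ : 1 < α₂)
    (hc₁ : 0 < c₁) (hc₂ : 0 < c₂) :
    (icxLEmeas (paretoMeasure α₁ c₁) (paretoMeasure α₂ c₂) ↔
      c₁ / (1 - 1 / α₁) ≤ c₂ / (1 - 1 / α₂) ∧ α₂ ≤ α₁) ∧
    (icvLEmeas (paretoMeasure α₁ c₁) (paretoMeasure α₂ c₂) ↔
      c₁ / (1 - 1 / α₁) ≤ c₂ / (1 - 1 / α₂) ∧ c₁ ≤ c₂) := by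
  have hα₁0 : (0:ℝ) < α₁ := by linarith
  have hα₂0 : (0:ℝ) < α₂ := by linarith
  have hnorm : ∀ cc aa : ℝ, 1 < aa → cc / (1 - 1 / aa) = cc * aa / (aa - 1) := by
    intro cc aa haa
    have h : 1 - 1 / aa = (aa - 1) / aa := by field_simp
    rw [h, div_div_eq_mul_div]
  have hmean1 : ∫ s in Ioo (0:ℝ) 1, pq α₁ c₁ s = c₁ * α₁ / (α₁ - 1) := integral_pq hα₁
  have hmean2 : ∫ s in Ioo (0:ℝ) 1, pq α₂ c₂ s = c₂ * α₂ / (α₂ - 1) := integral_pq hα₂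
  have hid1 : Integrable (fun x : ℝ => x) (paretoMeasure α₁ c₁) := by
    rw [pareto_integrable hα₁ hc₁ measurable_id']
    exact integrableOn_pq hα₁
  have hid2 : Integrable (fun x : ℝ => x) (paretoMeasure α₂ c₂) := by
    rw [pareto_integrable hα₂ hc₂ measurable_id']
    exact integrableOn_pq hα₂
  have hlam_fwd : (∫ x, (fun y : ℝ => y) x ∂(paretoMeasure α₁ c₁)) ≤
      (∫ x, (fun y : ℝ => y) x ∂(paretoMeasure α₂ c₂)) →
      c₁ / (1 - 1 / α₁) ≤ c₂ / (1 - 1 / α₂) := by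
    intro h
    rw [pareto_integral hα₁ hc₁ measurable_id', pareto_integral hα₂ hc₂ measurable_id'] at h
    have h' : (∫ s in Ioo (0:ℝ) 1, pq α₁ c₁ s) ≤ ∫ s in Ioo (0:ℝ) 1, pq α₂ c₂ s := h
    rw [hnorm c₁ α₁ hα₁, hnorm c₂ α₂ hα₂, ← hmean1, ← hmean2]
    exact h'
  have hlam_bwd : c₁ / (1 - 1 / α₁) ≤ c₂ / (1 - 1 / α₂) →
      (∫ s in Ioo (0:ℝ) 1, pq α₁ c₁ s) ≤ ∫ s in Ioo (0:ℝ) 1, pq α₂ c₂ s := by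
    intro h
    rw [hnorm c₁ α₁ hα₁, hnorm c₂ α₂ hα₂] at h
    rw [hmean1, hmean2]
    exact h
  constructor
  · constructor
    · intro hicx
      refine ⟨hlam_fwd (hicx _ monotone_id (convexOn_id convex_univ) hid1 hid2), ?_⟩
      by_contra hcon
      push_neg at hcon
      -- hcon : α₁ < α₂.  Compare stop-loss transforms at a large threshold t.
      have hδpos : 0 < α₂ - α₁ := by linarith
      have hApos : 0 < c₂ * α₂ / (α₂ - 1) * c₂ ^ (α₂ - 1) :=
        mul_pos (div_pos (mul_pos hc₂ hα₂0) (by linarith)) (Real.rpow_pos_of_pos hc₂ _)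
      have hBpos : 0 < c₁ ^ α₁ * (2:ℝ) ^ (-α₁) :=
        mul_pos (Real.rpow_pos_of_pos hc₁ _) (Real.rpow_pos_of_pos two_pos _)
      set A := c₂ * α₂ / (α₂ - 1) * c₂ ^ (α₂ - 1) with hAdef
      set B := c₁ ^ α₁ * (2:ℝ) ^ (-α₁) with hBdef
      have hABpos : 0 < A / B + 1 := by positivity
      set T := (A / B + 1) ^ (α₂ - α₁)⁻¹ with hTdef
      have hTpos : 0 < T := Real.rpow_pos_of_pos hABpos _
      set t := max (max c₁ c₂) T with htdef
      have htc₁ : c₁ ≤ t := le_trans (le_max_left _ _) (le_max_left _ _)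
      have htc₂ : c₂ ≤ t := le_trans (le_max_right _ _) (le_max_left _ _)
      have htT : T ≤ t := le_max_right _ _
      have ht0 : 0 < t := lt_of_lt_of_le hc₁ htc₁
      have hTδ : T ^ (α₂ - α₁) = A / B + 1 := by
        rw [hTdef, ← Real.rpow_mul hABpos.le, inv_mul_cancel₀ (ne_of_gt hδpos), Real.rpow_one]
      have htδ : A / B < t ^ (α₂ - α₁) := by
        have h := Real.rpow_le_rpow hTpos.le htT hδpos.le
        rw [hTδ] at h
        linarith
      have hkey : A * t ^ (1 - α₂) < B * t ^ (1 - α₁) := by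
        have h1 : t ^ (1 - α₁) = t ^ (1 - α₂) * t ^ (α₂ - α₁) := by
          rw [← Real.rpow_add ht0]; ring_nf
        have h2 : (0:ℝ) < t ^ (1 - α₂) := Real.rpow_pos_of_pos ht0 _
        rw [h1]
        rw [div_lt_iff₀ hBpos] at htδ
        calc A * t ^ (1 - α₂) < (t ^ (α₂ - α₁) * B) * t ^ (1 - α₂) :=
              mul_lt_mul_of_pos_right htδ h2
          _ = B * (t ^ (1 - α₂) * t ^ (α₂ - α₁)) := by ring
      set φ : ℝ → ℝ := fun x => max (x - t) 0 with hφdef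
      have hφmeas : Measurable φ := (measurable_id.sub_const t).max measurable_const
      have hnn : ∀ x : ℝ, 0 ≤ φ x := fun x => le_max_right _ _
      have hint1 : IntegrableOn (fun s => φ (pq α₁ c₁ s)) (Ioo (0:ℝ) 1) volume := by
        apply Integrable.mono (integrableOn_pq (c := c₁) hα₁)
          ((hφmeas.comp measurable_pq).aestronglyMeasurable)
        filter_upwards [ae_restrict_mem measurableSet_Ioo] with s hs
        have hq := pq_pos (α := α₁) hc₁ hs.2
        simp only [Function.comp_apply, Real.norm_eq_abs]
        rw [abs_of_nonneg (hnn _), abs_of_pos hq]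
        exact max_le (by linarith) hq.le
      have hint2 : IntegrableOn (fun s => φ (pq α₂ c₂ s)) (Ioo (0:ℝ) 1) volume := by
        apply Integrable.mono (integrableOn_pq (c := c₂) hα₂)
          ((hφmeas.comp measurable_pq).aestronglyMeasurable)
        filter_upwards [ae_restrict_mem measurableSet_Ioo] with s hs
        have hq := pq_pos (α := α₂) hc₂ hs.2
        simp only [Function.comp_apply, Real.norm_eq_abs]
        rw [abs_of_nonneg (hnn _), abs_of_pos hq]
        exact max_le (by linarith) hq.le
      have happ := hicx φ (phi_max_mono t) (phi_max_convex t)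
        ((pareto_integrable hα₁ hc₁ hφmeas).2 hint1) ((pareto_integrable hα₂ hc₂ hφmeas).2 hint2)
      rw [pareto_integral hα₁ hc₁ hφmeas, pareto_integral hα₂ hc₂ hφmeas] at happ
      -- lower bound on the first integral
      have hrstar_pos : 0 < (c₁/(2*t)) ^ α₁ := Real.rpow_pos_of_pos (by positivity) _
      have hrstar_lt1 : (c₁/(2*t)) ^ α₁ < 1 :=
        Real.rpow_lt_one (by positivity) (by rw [div_lt_one (by linarith)]; linarith) hα₁0
      have hlow1 : ∀ s ∈ Ioo (1 - (c₁/(2*t)) ^ α₁) 1, t ≤ φ (pq α₁ c₁ s) := by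
        intro s hs
        have h1s : (0:ℝ) < 1 - s := by linarith [hs.2]
        have hle : 1 - s ≤ (c₁/(2*t)) ^ α₁ := by linarith [hs.1]
        have h2 : ((c₁/(2*t)) ^ α₁) ^ (-α₁⁻¹) ≤ (1 - s) ^ (-α₁⁻¹) :=
          Real.rpow_le_rpow_of_nonpos h1s hle (by simp; positivity)
        have h3 : 2 * t ≤ pq α₁ c₁ s := by
          have hh := mul_le_mul_of_nonneg_left h2 hc₁.le
          rw [pq_thresh hc₁ (by linarith) (ne_of_gt hα₁0)] at hh
          exact hh
        calc t ≤ pq α₁ c₁ s - t := by linarith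
          _ ≤ φ (pq α₁ c₁ s) := le_max_left _ _
      have hsub : Ioo (1 - (c₁/(2*t)) ^ α₁) 1 ⊆ Ioo (0:ℝ) 1 :=
        Ioo_subset_Ioo (by linarith) le_rfl
      have hlowint : t * (c₁/(2*t)) ^ α₁ ≤ ∫ s in Ioo (0:ℝ) 1, φ (pq α₁ c₁ s) := by
        calc t * (c₁/(2*t)) ^ α₁ = ∫ _ in Ioo (1 - (c₁/(2*t)) ^ α₁) 1, t := by
              rw [setIntegral_const, Real.volume_real_Ioo_of_le (by linarith), smul_eq_mul,
                show (1 : ℝ) - (1 - (c₁/(2*t)) ^ α₁) = (c₁/(2*t)) ^ α₁ by ring]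
              ring
          _ ≤ ∫ s in Ioo (1 - (c₁/(2*t)) ^ α₁) 1, φ (pq α₁ c₁ s) := by
              apply setIntegral_mono_on (integrableOn_const measure_Ioo_lt_top.ne)
                (hint1.mono_set hsub) measurableSet_Ioo hlow1
          _ ≤ ∫ s in Ioo (0:ℝ) 1, φ (pq α₁ c₁ s) := by
              apply setIntegral_mono_set hint1 (ae_of_all _ (fun s => hnn _))
                (HasSubset.Subset.eventuallyLE hsub)
      -- upper bound on the second integral
      have hr₂pos : 0 < (c₂/t) ^ α₂ := Real.rpow_pos_of_pos (by positivity) _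
      have hr₂le1 : (c₂/t) ^ α₂ ≤ 1 :=
        Real.rpow_le_one (by positivity) (by rw [div_le_one ht0]; exact htc₂) hα₂0.le
      have hupbd : ∀ s ∈ Ioo (0:ℝ) 1,
          φ (pq α₂ c₂ s) ≤ (Ioo (1 - (c₂/t) ^ α₂) 1).indicator (pq α₂ c₂) s := by
        intro s hs
        by_cases hmem : s ∈ Ioo (1 - (c₂/t) ^ α₂) 1
        · rw [indicator_of_mem hmem]
          exact max_le (by linarith [pq_pos (α := α₂) hc₂ hs.2]) (pq_pos (α := α₂) hc₂ hs.2).le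
        · rw [indicator_of_notMem hmem]
          have hsle : s ≤ 1 - (c₂/t) ^ α₂ := by
            by_contra hx
            push_neg at hx
            exact hmem ⟨hx, hs.2⟩
          have hq : pq α₂ c₂ s ≤ t := by
            have hle : (c₂/t) ^ α₂ ≤ 1 - s := by linarith
            have h2 : (1 - s) ^ (-α₂⁻¹) ≤ ((c₂/t) ^ α₂) ^ (-α₂⁻¹) :=
              Real.rpow_le_rpow_of_nonpos hr₂pos hle (by simp; positivity)
            have hh := mul_le_mul_of_nonneg_left h2 hc₂.le
            rw [pq_thresh hc₂ ht0 (ne_of_gt hα₂0)] at hh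
            exact hh
          exact max_le (by linarith) le_rfl
      have hupint : (∫ s in Ioo (0:ℝ) 1, φ (pq α₂ c₂ s)) ≤ A * t ^ (1 - α₂) := by
        have hind : Integrable ((Ioo (1 - (c₂/t) ^ α₂) 1).indicator (pq α₂ c₂))
            (volume.restrict (Ioo (0:ℝ) 1)) :=
          (integrableOn_pq hα₂).indicator measurableSet_Ioo
        calc (∫ s in Ioo (0:ℝ) 1, φ (pq α₂ c₂ s))
            ≤ ∫ s in Ioo (0:ℝ) 1, (Ioo (1 - (c₂/t) ^ α₂) 1).indicator (pq α₂ c₂) s :=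
              setIntegral_mono_on hint2 hind measurableSet_Ioo hupbd
          _ = ∫ s in Ioo (1 - (c₂/t) ^ α₂) 1, pq α₂ c₂ s := by
              rw [setIntegral_indicator measurableSet_Ioo]
              congr 1
              rw [Ioo_inter_Ioo, max_eq_right (by linarith), min_self]
          _ = (c₂ * α₂ / (α₂ - 1)) * ((c₂/t) ^ α₂) ^ (1 - α₂⁻¹) := integral_pq_tail hα₂ hr₂pos
          _ = A * t ^ (1 - α₂) := by
              have hexpeq : α₂ * (1 - α₂⁻¹) = α₂ - 1 := by
                rw [mul_sub, mul_inv_cancel₀ (ne_of_gt hα₂0)]; ring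
              rw [← Real.rpow_mul (by positivity), hexpeq,
                Real.div_rpow hc₂.le ht0.le, hAdef,
                show (1 - α₂ : ℝ) = -(α₂ - 1) by ring, Real.rpow_neg ht0.le, div_eq_mul_inv]
              ring
      have hlow2 : t * (c₁/(2*t)) ^ α₁ = B * t ^ (1 - α₁) := by
        rw [Real.div_rpow hc₁.le (by positivity), Real.mul_rpow two_pos.le ht0.le, hBdef,
          show (1 - α₁ : ℝ) = 1 + -α₁ by ring, Real.rpow_add ht0, Real.rpow_one,
          Real.rpow_neg ht0.le, Real.rpow_neg two_pos.le]
        have h2t : ((2:ℝ) ^ α₁) ≠ 0 := ne_of_gt (Real.rpow_pos_of_pos two_pos _)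
        have htα : (t ^ α₁) ≠ 0 := ne_of_gt (Real.rpow_pos_of_pos ht0 _)
        field_simp
      rw [hlow2] at hlowint
      linarith
    · rintro ⟨hlam, hαle⟩ φ hφm hφc hi1 hi2
      have hφmeas : Measurable φ := hφm.measurable
      rw [pareto_integral hα₁ hc₁ hφmeas, pareto_integral hα₂ hc₂ hφmeas]
      rw [pareto_integrable hα₁ hc₁ hφmeas] at hi1
      rw [pareto_integrable hα₂ hc₂ hφmeas] at hi2
      have hg := hlam_bwd hlam
      obtain ⟨k, hk0, hpt⟩ : ∃ k : ℝ, 0 ≤ k ∧ ∀ s ∈ Ioo (0:ℝ) 1,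
          φ (pq α₁ c₁ s) - φ (pq α₂ c₂ s) ≤ k * (pq α₁ c₁ s - pq α₂ c₂ s) := by
        by_cases hcc : c₁ ≤ c₂
        · refine ⟨0, le_rfl, fun s hs => ?_⟩
          have h := hφm (pq_le_pq hα₂ hαle hc₂ hcc hs.1.le hs.2)
          rw [zero_mul]
          linarith
        · push_neg at hcc
          have hαlt : α₂ < α₁ := by
            rcases lt_or_eq_of_le hαle with h | h
            · exact h
            · exfalso
              rw [hnorm c₁ α₁ hα₁, hnorm c₂ α₂ hα₂, ← h] at hlam
              have hpos : (0:ℝ) < α₂ / (α₂ - 1) := by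
                apply div_pos hα₂0; linarith
              rw [div_le_div_iff₀ (by linarith) (by linarith)] at hlam
              nlinarith [mul_pos (sub_pos.2 hcc) (mul_pos hα₂0 (show (0:ℝ) < α₂ - 1 by linarith))]
          have hinv : α₁⁻¹ < α₂⁻¹ := by
            rw [inv_lt_inv₀ hα₁0 hα₂0]; exact hαlt
          have hεneg : α₁⁻¹ - α₂⁻¹ < 0 := by linarith
          have hratio1 : 1 < c₁ / c₂ := (one_lt_div hc₂).2 hcc
          have hr₀pos : 0 < (c₁ / c₂) ^ (α₁⁻¹ - α₂⁻¹)⁻¹ :=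
            Real.rpow_pos_of_pos (by positivity) _
          have hr₀lt1 : (c₁ / c₂) ^ (α₁⁻¹ - α₂⁻¹)⁻¹ < 1 :=
            Real.rpow_lt_one_of_one_lt_of_neg hratio1 (by simpa using inv_neg''.2 hεneg)
          set r₀ := (c₁ / c₂) ^ (α₁⁻¹ - α₂⁻¹)⁻¹ with hr₀def
          have hr₀ε : r₀ ^ (α₁⁻¹ - α₂⁻¹) = c₁ / c₂ := by
            rw [hr₀def, ← Real.rpow_mul (by positivity), inv_mul_cancel₀ (ne_of_lt hεneg),
              Real.rpow_one]
          have hs₀0 : 0 < 1 - r₀ := by linarith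
          have hs₀1 : 1 - r₀ < 1 := by linarith
          obtain ⟨k, hk0, hkl, hkr⟩ := convex_sep hφm hφc (pq α₁ c₁ (1 - r₀))
          refine ⟨k, hk0, fun s hs => ?_⟩
          have h1s : (0:ℝ) < 1 - s := by linarith [hs.2]
          rcases le_or_gt s (1 - r₀) with hss | hss
          · have hr : r₀ ≤ 1 - s := by linarith
            have hre : (1 - s) ^ (α₁⁻¹ - α₂⁻¹) ≤ r₀ ^ (α₁⁻¹ - α₂⁻¹) :=
              Real.rpow_le_rpow_of_nonpos hr₀pos hr hεneg.le
            rw [hr₀ε] at hre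
            have h21 : pq α₂ c₂ s ≤ pq α₁ c₁ s := by
              rw [pq_le_iff hc₁ hs.2]
              have hrs : (0:ℝ) < (1 - s) ^ (α₁⁻¹ - α₂⁻¹) := Real.rpow_pos_of_pos h1s _
              rw [show (α₂⁻¹ - α₁⁻¹ : ℝ) = -(α₁⁻¹ - α₂⁻¹) by ring, Real.rpow_neg h1s.le,
                ← div_eq_mul_inv, le_div_iff₀ hrs]
              calc c₂ * (1 - s) ^ (α₁⁻¹ - α₂⁻¹) ≤ c₂ * (c₁ / c₂) :=
                    mul_le_mul_of_nonneg_left hre hc₂.le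
                _ = c₁ := by field_simp
            have hb : pq α₁ c₁ s ≤ pq α₁ c₁ (1 - r₀) := pq_mono hα₁ hc₁ hss hs₀1
            have := hkl _ _ h21 hb
            linarith
          · have hr : 1 - s ≤ r₀ := by linarith
            have hre : r₀ ^ (α₁⁻¹ - α₂⁻¹) ≤ (1 - s) ^ (α₁⁻¹ - α₂⁻¹) :=
              Real.rpow_le_rpow_of_nonpos h1s hr hεneg.le
            rw [hr₀ε] at hre
            have h12 : pq α₁ c₁ s ≤ pq α₂ c₂ s := by
              rw [pq_le_iff hc₂ hs.2]
              calc c₁ = c₂ * (c₁ / c₂) := by field_simp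
                _ ≤ c₂ * (1 - s) ^ (α₁⁻¹ - α₂⁻¹) := mul_le_mul_of_nonneg_left hre hc₂.le
            have ha : pq α₁ c₁ (1 - r₀) ≤ pq α₁ c₁ s := pq_mono hα₁ hc₁ hss.le hs.2
            have := hkr _ _ ha h12
            linarith
      exact integ_step hi1 hi2 (integrableOn_pq hα₁) (integrableOn_pq hα₂) hk0
        (by filter_upwards [ae_restrict_mem measurableSet_Ioo] with s hs using hpt s hs) hg
  · constructor
    · intro hicv
      refine ⟨hlam_fwd (hicv _ monotone_id (concaveOn_id convex_univ) hid1 hid2), ?_⟩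
      by_contra hcon
      push_neg at hcon
      -- hcon : c₂ < c₁.  Compare lower partial moments at t between c₂ and c₁.
      set t := (c₂ + c₁) / 2 with htdef
      have htc₂ : c₂ < t := by rw [htdef]; linarith
      have htc₁ : t < c₁ := by rw [htdef]; linarith
      have ht0 : 0 < t := by linarith
      set t' := (c₂ + t) / 2 with ht'def
      have ht'1 : c₂ < t' := by rw [ht'def]; linarith
      have ht'2 : t' < t := by rw [ht'def]; linarith
      have ht'0 : 0 < t' := by linarith
      set φ : ℝ → ℝ := fun x => min x t with hφdef
      have hφmeas : Measurable φ := measurable_id.min measurable_const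
      have hint1 : IntegrableOn (fun s => φ (pq α₁ c₁ s)) (Ioo (0:ℝ) 1) volume := by
        apply Integrable.mono (integrableOn_pq (c := c₁) hα₁)
          ((hφmeas.comp measurable_pq).aestronglyMeasurable)
        filter_upwards [ae_restrict_mem measurableSet_Ioo] with s hs
        have hq := pq_pos (α := α₁) hc₁ hs.2
        simp only [Function.comp_apply, Real.norm_eq_abs]
        rw [abs_of_pos (lt_min hq ht0), abs_of_pos hq]
        exact min_le_left _ _
      have hint2 : IntegrableOn (fun s => φ (pq α₂ c₂ s)) (Ioo (0:ℝ) 1) volume := by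
        apply Integrable.mono (integrableOn_pq (c := c₂) hα₂)
          ((hφmeas.comp measurable_pq).aestronglyMeasurable)
        filter_upwards [ae_restrict_mem measurableSet_Ioo] with s hs
        have hq := pq_pos (α := α₂) hc₂ hs.2
        simp only [Function.comp_apply, Real.norm_eq_abs]
        rw [abs_of_pos (lt_min hq ht0), abs_of_pos hq]
        exact min_le_left _ _
      have happ := hicv φ (phi_min_mono t) (phi_min_concave t)
        ((pareto_integrable hα₁ hc₁ hφmeas).2 hint1) ((pareto_integrable hα₂ hc₂ hφmeas).2 hint2)
      rw [pareto_integral hα₁ hc₁ hφmeas, pareto_integral hα₂ hc₂ hφmeas] at happ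
      have hL : ∫ s in Ioo (0:ℝ) 1, φ (pq α₁ c₁ s) = t := by
        rw [setIntegral_congr_fun measurableSet_Ioo
          (g := fun _ => t) (fun s hs => min_eq_right
            (le_of_lt (lt_trans htc₁ (pq_gt hα₁ hc₁ hs.1 hs.2))))]
        rw [setIntegral_const, Real.volume_real_Ioo_of_le (by norm_num), smul_eq_mul]
        norm_num
      have hr'pos : 0 < (c₂/t') ^ α₂ := Real.rpow_pos_of_pos (by positivity) _
      have hr'lt1 : (c₂/t') ^ α₂ < 1 :=
        Real.rpow_lt_one (by positivity) ((div_lt_one ht'0).2 ht'1) hα₂0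
      have hclaim : ∀ s ∈ Ioo (0:ℝ) (1 - (c₂/t') ^ α₂), t - t' ≤ t - φ (pq α₂ c₂ s) := by
        intro s hs
        have hs1 : s < 1 := by linarith [hs.2]
        have hle : (c₂/t') ^ α₂ ≤ 1 - s := by linarith [hs.2]
        have h2 : (1 - s) ^ (-α₂⁻¹) ≤ ((c₂/t') ^ α₂) ^ (-α₂⁻¹) :=
          Real.rpow_le_rpow_of_nonpos hr'pos hle (by simp; positivity)
        have hq : pq α₂ c₂ s ≤ t' := by
          have hh := mul_le_mul_of_nonneg_left h2 hc₂.le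
          rw [pq_thresh hc₂ ht'0 (ne_of_gt hα₂0)] at hh
          exact hh
        have : φ (pq α₂ c₂ s) ≤ t' := le_trans (min_le_left _ _) hq
        linarith
      have hsubint : IntegrableOn (fun s => t - φ (pq α₂ c₂ s)) (Ioo (0:ℝ) 1) volume :=
        (integrableOn_const (s := Ioo (0:ℝ) 1) (C := t) measure_Ioo_lt_top.ne).sub hint2
      have hsub : Ioo (0:ℝ) (1 - (c₂/t') ^ α₂) ⊆ Ioo (0:ℝ) 1 :=
        Ioo_subset_Ioo le_rfl (by linarith)
      have hnn2 : ∀ s : ℝ, 0 ≤ t - φ (pq α₂ c₂ s) :=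
        fun s => sub_nonneg.2 (min_le_right _ _)
      have hchain : (t - t') * (1 - (c₂/t') ^ α₂) ≤
          ∫ s in Ioo (0:ℝ) 1, (t - φ (pq α₂ c₂ s)) := by
        calc (t - t') * (1 - (c₂/t') ^ α₂)
            = ∫ _ in Ioo (0:ℝ) (1 - (c₂/t') ^ α₂), (t - t') := by
              rw [setIntegral_const, Real.volume_real_Ioo_of_le (by linarith), smul_eq_mul, sub_zero]
              ring
          _ ≤ ∫ s in Ioo (0:ℝ) (1 - (c₂/t') ^ α₂), (t - φ (pq α₂ c₂ s)) := by
              apply setIntegral_mono_on (integrableOn_const measure_Ioo_lt_top.ne)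
                (hsubint.mono_set hsub) measurableSet_Ioo hclaim
          _ ≤ ∫ s in Ioo (0:ℝ) 1, (t - φ (pq α₂ c₂ s)) := by
              apply setIntegral_mono_set hsubint (ae_of_all _ hnn2)
                (HasSubset.Subset.eventuallyLE hsub)
      have hsplit : ∫ s in Ioo (0:ℝ) 1, (t - φ (pq α₂ c₂ s)) =
          t - ∫ s in Ioo (0:ℝ) 1, φ (pq α₂ c₂ s) := by
        rw [integral_sub (integrableOn_const (s := Ioo (0:ℝ) 1) (C := t) measure_Ioo_lt_top.ne) hint2]
        congr 1
        rw [setIntegral_const, Real.volume_real_Ioo_of_le (by norm_num), smul_eq_mul]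
        norm_num
      rw [hsplit] at hchain
      have hposgap : 0 < (t - t') * (1 - (c₂/t') ^ α₂) :=
        mul_pos (by linarith) (by linarith)
      rw [hL] at happ
      linarith
    · rintro ⟨hlam, hcle⟩ φ hφm hφc hi1 hi2
      have hφmeas : Measurable φ := hφm.measurable
      rw [pareto_integral hα₁ hc₁ hφmeas, pareto_integral hα₂ hc₂ hφmeas]
      rw [pareto_integrable hα₁ hc₁ hφmeas] at hi1
      rw [pareto_integrable hα₂ hc₂ hφmeas] at hi2
      have hg := hlam_bwd hlam
      obtain ⟨k, hk0, hpt⟩ : ∃ k : ℝ, 0 ≤ k ∧ ∀ s ∈ Ioo (0:ℝ) 1,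
          φ (pq α₁ c₁ s) - φ (pq α₂ c₂ s) ≤ k * (pq α₁ c₁ s - pq α₂ c₂ s) := by
        by_cases hαc : α₂ ≤ α₁
        · refine ⟨0, le_rfl, fun s hs => ?_⟩
          have h := hφm (pq_le_pq hα₂ hαc hc₂ hcle hs.1.le hs.2)
          rw [zero_mul]
          linarith
        · push_neg at hαc
          have hclt : c₁ < c₂ := by
            rcases lt_or_eq_of_le hcle with h | h
            · exact h
            · exfalso
              rw [hnorm c₁ α₁ hα₁, hnorm c₂ α₂ hα₂, ← h] at hlam
              rw [div_le_div_iff₀ (by linarith) (by linarith)] at hlam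
              nlinarith
          have hinv : α₂⁻¹ < α₁⁻¹ := by
            rw [inv_lt_inv₀ hα₂0 hα₁0]; exact hαc
          have hεpos : 0 < α₁⁻¹ - α₂⁻¹ := by linarith
          have hratio1 : c₁ / c₂ < 1 := (div_lt_one hc₂).2 hclt
          have hr₀pos : 0 < (c₁ / c₂) ^ (α₁⁻¹ - α₂⁻¹)⁻¹ :=
            Real.rpow_pos_of_pos (by positivity) _
          have hr₀lt1 : (c₁ / c₂) ^ (α₁⁻¹ - α₂⁻¹)⁻¹ < 1 :=
            Real.rpow_lt_one (by positivity) hratio1 (by positivity)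
          set r₀ := (c₁ / c₂) ^ (α₁⁻¹ - α₂⁻¹)⁻¹ with hr₀def
          have hr₀ε : r₀ ^ (α₁⁻¹ - α₂⁻¹) = c₁ / c₂ := by
            rw [hr₀def, ← Real.rpow_mul (by positivity), inv_mul_cancel₀ (ne_of_gt hεpos),
              Real.rpow_one]
          have hs₀0 : 0 < 1 - r₀ := by linarith
          have hs₀1 : 1 - r₀ < 1 := by linarith
          -- pq₂ (1 - r₀) = pq₁ (1 - r₀)
          have hx₀eq : pq α₂ c₂ (1 - r₀) = pq α₁ c₁ (1 - r₀) := by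
            have h1r : (1 : ℝ) - (1 - r₀) = r₀ := by ring
            have hle1 : pq α₁ c₁ (1 - r₀) ≤ pq α₂ c₂ (1 - r₀) := by
              rw [pq_le_iff hc₂ hs₀1, h1r, hr₀ε]
              rw [mul_div_cancel₀ _ (ne_of_gt hc₂)]
            have hle2 : pq α₂ c₂ (1 - r₀) ≤ pq α₁ c₁ (1 - r₀) := by
              rw [pq_le_iff hc₁ hs₀1, h1r]
              rw [show (α₂⁻¹ - α₁⁻¹ : ℝ) = -(α₁⁻¹ - α₂⁻¹) by ring, Real.rpow_neg hr₀pos.le,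
                hr₀ε]
              have hcc' : c₁ * (c₁ / c₂)⁻¹ = c₂ := by field_simp
              rw [hcc']
            linarith
          obtain ⟨k, hk0, hkl, hkr⟩ := concave_sep hφm hφc (pq α₁ c₁ (1 - r₀))
          refine ⟨k, hk0, fun s hs => ?_⟩
          have h1s : (0:ℝ) < 1 - s := by linarith [hs.2]
          rcases le_or_gt s (1 - r₀) with hss | hss
          · have hr : r₀ ≤ 1 - s := by linarith
            have hre : r₀ ^ (α₁⁻¹ - α₂⁻¹) ≤ (1 - s) ^ (α₁⁻¹ - α₂⁻¹) :=
              Real.rpow_le_rpow hr₀pos.le hr hεpos.le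
            rw [hr₀ε] at hre
            have h12 : pq α₁ c₁ s ≤ pq α₂ c₂ s := by
              rw [pq_le_iff hc₂ hs.2]
              calc c₁ = c₂ * (c₁ / c₂) := by field_simp
                _ ≤ c₂ * (1 - s) ^ (α₁⁻¹ - α₂⁻¹) := mul_le_mul_of_nonneg_left hre hc₂.le
            have hb : pq α₂ c₂ s ≤ pq α₁ c₁ (1 - r₀) := by
              rw [← hx₀eq]
              exact pq_mono hα₂ hc₂ hss hs₀1
            have := hkl _ _ h12 hb
            linarith
          · have hr : 1 - s ≤ r₀ := by linarith
            have hre : (1 - s) ^ (α₁⁻¹ - α₂⁻¹) ≤ r₀ ^ (α₁⁻¹ - α₂⁻¹) :=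
              Real.rpow_le_rpow h1s.le hr hεpos.le
            rw [hr₀ε] at hre
            have h21 : pq α₂ c₂ s ≤ pq α₁ c₁ s := by
              rw [pq_le_iff hc₁ hs.2]
              have hrs : (0:ℝ) < (1 - s) ^ (α₁⁻¹ - α₂⁻¹) := Real.rpow_pos_of_pos h1s _
              rw [show (α₂⁻¹ - α₁⁻¹ : ℝ) = -(α₁⁻¹ - α₂⁻¹) by ring, Real.rpow_neg h1s.le,
                ← div_eq_mul_inv, le_div_iff₀ hrs]
              calc c₂ * (1 - s) ^ (α₁⁻¹ - α₂⁻¹) ≤ c₂ * (c₁ / c₂) :=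
                    mul_le_mul_of_nonneg_left hre hc₂.le
                _ = c₁ := by field_simp
            have ha : pq α₁ c₁ (1 - r₀) ≤ pq α₂ c₂ s := by
              rw [← hx₀eq]
              exact pq_mono hα₂ hc₂ hss.le hs.2
            have := hkr _ _ ha h21
            linarith
      exact integ_step hi1 hi2 (integrableOn_pq hα₁) (integrableOn_pq hα₂) hk0
        (by filter_upwards [ae_restrict_mem measurableSet_Ioo] with s hs using hpt s hs) hg
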